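/- arXiv:math/0612238 — 3 statements merged into one kernel-verified Lean document; each statement's English description precedes it below -/
import Mathlib

section
/- Let c > 0 and define the two-term asymptotic profile U_c : ℝ → ℝ by U_c(z) = 1/(1 + e^{z/c}) + (1/c²)· e^{z/c}/(1 + e^{z/c})² · log( 4 e^{z/c}/(1 + e^{z/c})² ). Then U_c(0) = 1/2 and U_c'(0) = −1/(4c) exactly; i.e. the slope of the asymptotic travelling-wave profile at its inflection point z = 0 is related to the wave speed by U'(0) = −1/(4c). -/
/-- For the two-term asymptotic Fisher travelling-wave profile
`U_c(z) = 1/(1+e^{z/c}) + (1/c²)·e^{z/c}/(1+e^{z/c})²·log(4e^{z/c}/(1+e^{z/c})²)`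
one has `U_c(0) = 1/2` and `U_c'(0) = −1/(4c)` exactly: the slope at the inflection point
is related to the wave speed by `U'(0) = −1/(4c)`. -/
theorem stmt_8 (c : ℝ) (hc : 0 < c) (U : ℝ → ℝ)
    (hU : ∀ z : ℝ, U z =
      1 / (1 + Real.exp (z / c)) +
        (1 / c ^ 2) * (Real.exp (z / c) / (1 + Real.exp (z / c)) ^ 2) *
          Real.log (4 * Real.exp (z / c) / (1 + Real.exp (z / c)) ^ 2)) :
    U 0 = 1 / 2 ∧ deriv U 0 = -(1 / (4 * c)) := by
  have hc' : c ≠ 0 := ne_of_gt hc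
  have hE0 : Real.exp ((0:ℝ) / c) = 1 := by simp
  constructor
  · rw [hU 0, hE0]; norm_num
  · have hUeq : U = fun z => 1 / (1 + Real.exp (z / c)) +
        (1 / c ^ 2) * (Real.exp (z / c) / (1 + Real.exp (z / c)) ^ 2) *
          Real.log (4 * Real.exp (z / c) / (1 + Real.exp (z / c)) ^ 2) := funext hU
    have hE : HasDerivAt (fun z : ℝ => Real.exp (z / c)) (1 / c) 0 := by
      have h := ((hasDerivAt_id (0:ℝ)).div_const c).exp
      simpa [hE0] using h
    have hD : HasDerivAt (fun z : ℝ => 1 + Real.exp (z / c)) (1 / c) 0 := hE.const_add 1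
    have hD0 : (1 : ℝ) + Real.exp ((0:ℝ) / c) = 2 := by rw [hE0]; norm_num
    have hDne : (1 : ℝ) + Real.exp ((0:ℝ) / c) ≠ 0 := by rw [hD0]; norm_num
    have hP : HasDerivAt (fun z : ℝ => (1 + Real.exp (z / c)) ^ 2)
        (2 * (1 + Real.exp ((0:ℝ)/c)) ^ 1 * (1 / c)) 0 := hD.pow 2
    have hPne : ((1 : ℝ) + Real.exp ((0:ℝ) / c)) ^ 2 ≠ 0 := pow_ne_zero 2 hDne
    have h1 : HasDerivAt (fun z : ℝ => 1 / (1 + Real.exp (z / c)))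
        ((0 * (1 + Real.exp ((0:ℝ)/c)) - 1 * (1 / c)) / (1 + Real.exp ((0:ℝ)/c)) ^ 2) 0 :=
      (hasDerivAt_const (0:ℝ) (1:ℝ)).div hD hDne
    have hB : HasDerivAt (fun z : ℝ => Real.exp (z / c) / (1 + Real.exp (z / c)) ^ 2)
        (((1/c) * (1 + Real.exp ((0:ℝ)/c)) ^ 2 -
          Real.exp ((0:ℝ)/c) * (2 * (1 + Real.exp ((0:ℝ)/c)) ^ 1 * (1 / c))) /
          ((1 + Real.exp ((0:ℝ)/c)) ^ 2) ^ 2) 0 := hE.div hP hPne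
    have hN : HasDerivAt (fun z : ℝ => 4 * Real.exp (z / c)) (4 * (1/c)) 0 := hE.const_mul 4
    have hI : HasDerivAt (fun z : ℝ => 4 * Real.exp (z / c) / (1 + Real.exp (z / c)) ^ 2)
        ((4 * (1/c) * (1 + Real.exp ((0:ℝ)/c)) ^ 2 -
          4 * Real.exp ((0:ℝ)/c) * (2 * (1 + Real.exp ((0:ℝ)/c)) ^ 1 * (1 / c))) /
          ((1 + Real.exp ((0:ℝ)/c)) ^ 2) ^ 2) 0 := hN.div hP hPne
    have hIne : 4 * Real.exp ((0:ℝ)/c) / (1 + Real.exp ((0:ℝ)/c)) ^ 2 ≠ 0 := by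
      rw [hE0]; norm_num
    have hL := hI.log hIne
    have hBL := hB.mul hL
    have hT2 := hBL.const_mul (1 / c ^ 2)
    have hSum := h1.add hT2
    rw [hUeq]
    refine HasDerivAt.deriv ?_
    convert hSum using 1
    · funext x; simp only [Pi.add_apply, Pi.mul_apply]; ring
    · rw [hE0]; norm_num; ring
end

section
/- Let k > 0, D > 0 and let 0 < c < 2√(kD). Then there is no twice continuously differentiable function U : ℝ → ℝ with 0 ≤ U(z) ≤ 1 for all z ∈ ℝ, lim_{z→−∞} U(z) = 1, lim_{z→+∞} U(z) = 0, satisfying D U''(z) + c U'(z) + k U(z)(1 − U(z)) = 0 for all z ∈ ℝ. That is, the Fisher–Kolmogoroff equation admits no travelling front with values in [0,1] of speed below the minimal speed 2√(kD). -/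
open Real Filter Set

lemma sturm_key (k D b ω ε : ℝ) (U : ℝ → ℝ) (hk : 0 < k) (hD : 0 < D) (hω : 0 < ω)
    (hωsq : ω^2 = k*(1-ε)/D - b^2)
    (hU2 : ContDiff ℝ 2 U)
    (hpos : ∀ z, 0 ≤ U z)
    (hODE : ∀ z, D * deriv (deriv U) z + 2*b*D * deriv U z + k * U z * (1 - U z) = 0)
    (z0 : ℝ) (hsm : ∀ t ∈ Set.Icc z0 (z0 + Real.pi/ω), U t ≤ ε) :
    U z0 = 0 := by
  have hD' : D ≠ 0 := hD.ne'
  have hU2' : ContDiff ℝ (1+1) U := by norm_num; exact hU2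
  obtain ⟨hdiff, -, hcd⟩ := contDiff_succ_iff_deriv.mp hU2'
  have hdiff2 : Differentiable ℝ (deriv U) := hcd.differentiable one_ne_zero
  set g : ℝ → ℝ := fun z => Real.exp (-b*(z-z0)) * Real.sin (ω*(z-z0)) with hgdef
  set g1 : ℝ → ℝ := fun z => Real.exp (-b*(z-z0)) * (ω * Real.cos (ω*(z-z0)) - b * Real.sin (ω*(z-z0))) with hg1def
  set g2 : ℝ → ℝ := fun z => Real.exp (-b*(z-z0)) * ((b^2 - ω^2) * Real.sin (ω*(z-z0)) - 2*b*ω * Real.cos (ω*(z-z0))) with hg2def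
  have hlin : ∀ z, HasDerivAt (fun z => ω*(z-z0)) ω z := by
    intro z
    simpa using ((hasDerivAt_id z).sub_const z0).const_mul ω
  have hexp : ∀ z, HasDerivAt (fun z => Real.exp (-b*(z-z0))) (-b * Real.exp (-b*(z-z0))) z := by
    intro z
    have h1 : HasDerivAt (fun z => -b*(z-z0)) (-b) z := by
      simpa using ((hasDerivAt_id z).sub_const z0).const_mul (-b)
    simpa [mul_comm] using h1.exp
  have hg : ∀ z, HasDerivAt g (g1 z) z := by
    intro z
    have hs : HasDerivAt (fun z => Real.sin (ω*(z-z0))) (Real.cos (ω*(z-z0)) * ω) z :=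
      (hlin z).sin
    have := (hexp z).fun_mul hs
    simpa [hgdef, hg1def] using this.congr_deriv (by ring_nf)
  have hg1 : ∀ z, HasDerivAt g1 (g2 z) z := by
    intro z
    have hs : HasDerivAt (fun z => ω * Real.cos (ω*(z-z0)) - b * Real.sin (ω*(z-z0)))
        (ω * (-Real.sin (ω*(z-z0)) * ω) - b * (Real.cos (ω*(z-z0)) * ω)) z :=
      (((hlin z).cos).const_mul ω).sub (((hlin z).sin).const_mul b)
    have := (hexp z).fun_mul hs
    simpa [hg1def, hg2def] using this.congr_deriv (by ring_nf)
  have hg2id : ∀ z, g2 z = -(2*b) * g1 z - (k*(1-ε)/D) * g z := by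
    intro z
    simp only [hgdef, hg1def, hg2def]
    have : (b^2 - ω^2) = 2*b^2 - k*(1-ε)/D := by rw [hωsq]; ring
    rw [this]; ring
  set W : ℝ → ℝ := fun z => Real.exp (2*b*z) * (deriv U z * g z - U z * g1 z) with hWdef
  have hW : ∀ z, HasDerivAt W (k/D * Real.exp (2*b*z) * g z * U z * (U z - ε)) z := by
    intro z
    have he : HasDerivAt (fun z => Real.exp (2*b*z)) (2*b * Real.exp (2*b*z)) z := by
      have h1 : HasDerivAt (fun z => 2*b*z) (2*b) z := by simpa using (hasDerivAt_id z).const_mul (2*b)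
      simpa [mul_comm] using h1.exp
    have hin : HasDerivAt (fun z => deriv U z * g z - U z * g1 z)
        (deriv (deriv U) z * g z + deriv U z * g1 z - (deriv U z * g1 z + U z * g2 z)) z :=
      (((hdiff2 z).hasDerivAt.mul (hg z))).sub (((hdiff z).hasDerivAt.mul (hg1 z)))
    have hWd := he.mul hin
    have hd2 : deriv (deriv U) z = -(2*b) * deriv U z - (k/D) * (U z * (1 - U z)) := by
      have h := hODE z
      field_simp
      linarith
    refine hWd.congr_deriv ?_
    rw [hd2, hg2id z]
    field_simp
    ring
  -- endpoints
  set z1 : ℝ := z0 + Real.pi / ω with hz1def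
  have hπω : 0 < Real.pi / ω := div_pos Real.pi_pos hω
  have hz01 : z0 < z1 := by simp [hz1def]; linarith
  have hωz1 : ω * (z1 - z0) = Real.pi := by
    simp [hz1def]
    field_simp
  -- antitone on [z0, z1]
  have hanti : AntitoneOn W (Set.Icc z0 z1) := by
    apply antitoneOn_of_deriv_nonpos (convex_Icc z0 z1)
    · exact fun x _ => ((hW x).differentiableAt).continuousAt.continuousWithinAt
    · intro x hx
      exact ((hW x).differentiableAt).differentiableWithinAt
    · intro x hx
      rw [interior_Icc] at hx
      rw [(hW x).deriv]
      have hgx : 0 ≤ g x := by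
        simp only [hgdef]
        apply mul_nonneg (Real.exp_nonneg _)
        apply Real.sin_nonneg_of_nonneg_of_le_pi
        · have := hx.1; nlinarith
        · have hx2 : x ≤ z1 := hx.2.le
          have : ω * (x - z0) ≤ ω * (z1 - z0) := by nlinarith
          linarith [hωz1 ▸ this]
      have hUε : U x ≤ ε := hsm x ⟨hx.1.le, hx.2.le⟩
      have h1 : 0 ≤ k/D * Real.exp (2*b*x) * g x * U x :=
        mul_nonneg (mul_nonneg (mul_nonneg (by positivity) (Real.exp_nonneg _)) hgx) (hpos x)
      nlinarith
  have hWle := hanti ⟨le_refl z0, hz01.le⟩ ⟨hz01.le, le_refl z1⟩ hz01.le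
  -- values at endpoints
  have hgz0 : g z0 = 0 := by simp [hgdef]
  have hg1z0 : g1 z0 = ω := by simp [hg1def]
  have hgz1 : g z1 = 0 := by
    simp only [hgdef, hωz1, Real.sin_pi, mul_zero]
  have hg1z1 : g1 z1 = Real.exp (-b*(z1-z0)) * (-ω) := by
    simp only [hg1def, hωz1, Real.sin_pi, Real.cos_pi]
    ring
  have hWz0 : W z0 = -(Real.exp (2*b*z0) * U z0 * ω) := by
    simp [hWdef, hgz0, hg1z0]; ring
  have hWz1 : W z1 = Real.exp (2*b*z1) * (U z1 * (Real.exp (-b*(z1-z0)) * ω)) := by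
    simp [hWdef, hgz1, hg1z1]
  have hWz1nn : 0 ≤ W z1 := by
    rw [hWz1]
    have := hpos z1
    positivity
  rw [hWz0] at hWle
  have he0 : 0 < Real.exp (2*b*z0) := Real.exp_pos _
  have hU0 := hpos z0
  by_contra hne
  have hU0' : 0 < U z0 := lt_of_le_of_ne hU0 (Ne.symm hne)
  nlinarith [mul_pos (mul_pos he0 hU0') hω]

/-- For `k, D > 0` and any speed `0 < c < 2√(kD)`, the Fisher–Kolmogoroff equation admits no
travelling front with values in `[0,1]`: there is no `C²` profile `U` with `0 ≤ U ≤ 1`,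
`U(−∞) = 1`, `U(+∞) = 0`, solving `D U'' + c U' + k U(1−U) = 0`. -/
theorem stmt_11 (k D c : ℝ) (hk : 0 < k) (hD : 0 < D)
    (hc0 : 0 < c) (hc : c < 2 * Real.sqrt (k * D)) :
    ¬ ∃ U : ℝ → ℝ, ContDiff ℝ 2 U ∧
      (∀ z : ℝ, 0 ≤ U z ∧ U z ≤ 1) ∧
      Filter.Tendsto U Filter.atBot (nhds 1) ∧
      Filter.Tendsto U Filter.atTop (nhds 0) ∧
      ∀ z : ℝ, D * deriv (deriv U) z + c * deriv U z + k * U z * (1 - U z) = 0 := by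
  rintro ⟨U, hU2, hU01, hbot, htop, hODE⟩
  have hD' : D ≠ 0 := hD.ne'
  have hpos : ∀ z, 0 ≤ U z := fun z => (hU01 z).1
  have hc2 : c^2 < 4*(k*D) := by
    have hs : Real.sqrt (k*D) ^ 2 = k*D := Real.sq_sqrt (mul_pos hk hD).le
    nlinarith [Real.sqrt_nonneg (k*D)]
  set ε : ℝ := (4*k*D - c^2)/(8*k*D) with hεdef
  have hε0 : 0 < ε := by
    apply div_pos <;> nlinarith
  set b : ℝ := c/(2*D) with hbdef
  have hbc : 2*b*D = c := by rw [hbdef]; field_simp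
  have hposq : 0 < k*(1-ε)/D - b^2 := by
    have h1 : k*(1-ε)/D - b^2 = (4*k*D - c^2)/(8*D^2) := by
      rw [hεdef, hbdef]
      field_simp
      ring
    rw [h1]
    apply div_pos <;> nlinarith
  set ω : ℝ := Real.sqrt (k*(1-ε)/D - b^2) with hωdef
  have hω : 0 < ω := Real.sqrt_pos.mpr hposq
  have hωsq : ω^2 = k*(1-ε)/D - b^2 := Real.sq_sqrt hposq.le
  have hODE2 : ∀ z, D * deriv (deriv U) z + 2*b*D * deriv U z + k * U z * (1 - U z) = 0 := by
    intro z; rw [hbc]; exact hODE z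
  have key : ∀ z0, (∀ t ∈ Set.Icc z0 (z0 + Real.pi/ω), U t ≤ ε) → U z0 = 0 :=
    fun z0 hsm => sturm_key k D b ω ε U hk hD hω hωsq hU2 hpos hODE2 z0 hsm
  obtain ⟨Z, hZ⟩ := (htop.eventually_lt_const hε0).exists_forall_of_atTop
  obtain ⟨w, hw⟩ : ∃ w, ∀ x ≤ w, (1:ℝ)/2 < U x := by
    have h := hbot.eventually (eventually_gt_nhds (show (1:ℝ)/2 < 1 by norm_num))
    rwa [Filter.eventually_atBot] at h
  set S : Set ℝ := {z | ∀ t, z ≤ t → U t = 0} with hSdef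
  have hZS : Z ∈ S := by
    intro t ht
    apply key
    intro u hu
    exact (hZ u (le_trans ht hu.1)).le
  have hSbdd : BddBelow S := by
    refine ⟨w, fun a ha => ?_⟩
    by_contra hcon
    push_neg at hcon
    have h1 := ha w hcon.le
    have h2 := hw w le_rfl
    linarith
  have hSne : S.Nonempty := ⟨Z, hZS⟩
  set s : ℝ := sInf S with hsdef
  have hgt : ∀ t, s < t → U t = 0 := by
    intro t ht
    obtain ⟨a, haS, hat⟩ := (csInf_lt_iff hSbdd hSne).mp ht
    exact haS t hat.le
  have hUs : U s = 0 := by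
    have hcl : IsClosed {z : ℝ | U z = 0} := isClosed_eq hU2.continuous continuous_const
    have hsub : Set.Ioi s ⊆ {z : ℝ | U z = 0} := fun t ht => hgt t ht
    have hmem : s ∈ closure (Set.Ioi s) := by rw [closure_Ioi]; exact Set.self_mem_Ici
    exact hcl.closure_subset (closure_mono hsub hmem)
  have hcont : ∀ᶠ z in nhds s, U z < ε := by
    have h := hU2.continuous.continuousAt (x := s)
    rw [ContinuousAt, hUs] at h
    exact h.eventually_lt_const hε0
  obtain ⟨δ, hδ0, hδ⟩ := Metric.eventually_nhds_iff.mp hcont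
  have hmem : s - δ/2 ∈ S := by
    intro t ht
    rcases lt_or_ge s t with h | h
    · exact hgt t h
    · apply key
      intro u hu
      rcases lt_or_ge s u with h2 | h2
      · rw [hgt u h2]; exact hε0.le
      · refine (hδ ?_).le
        rw [Real.dist_eq]
        have h3 : s - δ/2 ≤ u := le_trans ht hu.1
        rw [abs_of_nonpos (by linarith)]
        linarith
  have hfin : s ≤ s - δ/2 := csInf_le hSbdd hmem
  linarith
end

section
/- Define U : ℝ → ℝ by U(z) = 1 − e^{z/√2}. Then for every z ∈ ℝ the identity U(z)·U''(z) + (U'(z))² + (1/√2)·U'(z) + U(z)(1 − U(z)) = 0 holds; equivalently, (U U')'(z) + (1/√2) U'(z) + U(z)(1 − U(z)) = 0. That is, U is an exact travelling-wave profile of speed c = 1/√2 for the porous-Fisher equation with p = q = m = 1. -/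
/-- `U(z) = 1 − e^{z/√2}` satisfies `U U'' + (U')² + (1/√2)U' + U(1−U) = 0`, equivalently
`(U U')' + (1/√2)U' + U(1−U) = 0`: it is an exact travelling-wave profile of speed `1/√2`
for the porous-Fisher equation with `p = q = m = 1`. -/
theorem stmt_12 (U : ℝ → ℝ)
    (hU : ∀ z : ℝ, U z = 1 - Real.exp (z / Real.sqrt 2)) :
    ∀ z : ℝ,
      U z * deriv (deriv U) z + (deriv U z) ^ 2 + (1 / Real.sqrt 2) * deriv U z +
          U z * (1 - U z) = 0 ∧
      deriv (fun y => U y * deriv U y) z + (1 / Real.sqrt 2) * deriv U z +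
          U z * (1 - U z) = 0 := by
  have hUfun : U = fun z => 1 - Real.exp (z / Real.sqrt 2) := funext hU
  subst hUfun
  set s : ℝ := Real.sqrt 2 with hs
  have hs0 : s ≠ 0 := by
    simp [hs]
  have hs2 : s ^ 2 = 2 := Real.sq_sqrt (by norm_num)
  have hd : ∀ z : ℝ, HasDerivAt (fun z : ℝ => 1 - Real.exp (z / s))
      (-(Real.exp (z / s) / s)) z := by
    intro z
    have h1 : HasDerivAt (fun z : ℝ => Real.exp (z / s)) (Real.exp (z / s) / s) z := by
      have := ((hasDerivAt_id z).div_const s).exp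
      simpa [div_eq_mul_inv, mul_comm] using this
    simpa using h1.const_sub 1
  have hderiv : deriv (fun z : ℝ => 1 - Real.exp (z / s)) =
      fun z => -(Real.exp (z / s) / s) := funext fun z => (hd z).deriv
  have hd2 : ∀ z : ℝ, HasDerivAt (fun z : ℝ => -(Real.exp (z / s) / s))
      (-(Real.exp (z / s) / s / s)) z := by
    intro z
    have h1 : HasDerivAt (fun z : ℝ => Real.exp (z / s)) (Real.exp (z / s) / s) z := by
      have := ((hasDerivAt_id z).div_const s).exp
      simpa [div_eq_mul_inv, mul_comm] using this
    exact (h1.div_const s).neg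
  have hderiv2 : deriv (deriv (fun z : ℝ => 1 - Real.exp (z / s))) =
      fun z => -(Real.exp (z / s) / s / s) := by
    rw [hderiv]; exact funext fun z => (hd2 z).deriv
  intro z
  have hprod : HasDerivAt (fun y : ℝ =>
      (1 - Real.exp (y / s)) * deriv (fun z : ℝ => 1 - Real.exp (z / s)) y)
      ((-(Real.exp (z / s) / s)) * (-(Real.exp (z / s) / s)) +
        (1 - Real.exp (z / s)) * (-(Real.exp (z / s) / s / s))) z := by
    have := (hd z).mul (hd2 z)
    rw [hderiv]
    exact this
  constructor
  · rw [hderiv2, hderiv]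
    field_simp
    linear_combination (Real.exp (z / s) - Real.exp (z / s) ^ 2) * hs2
  · rw [hprod.deriv, hderiv]
    field_simp
    linear_combination (Real.exp (z / s) - Real.exp (z / s) ^ 2) * hs2
end
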